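/- If y: ℝ → ℝ is twice differentiable and satisfies y''(x) + 2π y'(x) + (5/4)π² y(x) = 0 for all x ∈ [1, 3], then y(x) = c₁ y₁(x) + c₂ y₂(x) for all x ∈ [1, 3], where c₁ = y(1) and c₂ = (2/π)·y'(1). -/

import Mathlib

/-- `y₁(x) = e^{-π(x-1)}(cos(π(x-1)/2) + 2 sin(π(x-1)/2))`. -/
noncomputable def y₁ (x : ℝ) : ℝ :=
  Real.exp (-Real.pi * (x - 1)) *
    (Real.cos (Real.pi * (x - 1) / 2) + 2 * Real.sin (Real.pi * (x - 1) / 2))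

/-- `y₂(x) = e^{-π(x-1)} sin(π(x-1)/2)`. -/
noncomputable def y₂ (x : ℝ) : ℝ :=
  Real.exp (-Real.pi * (x - 1)) * Real.sin (Real.pi * (x - 1) / 2)

open Real Set

noncomputable def Efun (x : ℝ) : ℝ := Real.exp (-Real.pi * (x - 1))
noncomputable def Sfun (x : ℝ) : ℝ := Real.sin (Real.pi * (x - 1) / 2)
noncomputable def Cfun (x : ℝ) : ℝ := Real.cos (Real.pi * (x - 1) / 2)

lemma hE (x : ℝ) : HasDerivAt Efun (-Real.pi * Efun x) x := by
  have h : HasDerivAt (fun x : ℝ => -Real.pi * (x - 1)) (-Real.pi) x := by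
    simpa using ((hasDerivAt_id x).sub_const 1).const_mul (-Real.pi)
  unfold Efun
  simpa [mul_comm] using h.exp

lemma hS (x : ℝ) : HasDerivAt Sfun (Real.pi / 2 * Cfun x) x := by
  have h : HasDerivAt (fun x : ℝ => Real.pi * (x - 1) / 2) (Real.pi / 2) x := by
    simpa [mul_div_assoc] using (((hasDerivAt_id x).sub_const 1).const_mul Real.pi).div_const 2
  unfold Sfun Cfun
  simpa [mul_comm, Function.comp_def] using (Real.hasDerivAt_sin _).comp x h

lemma hC (x : ℝ) : HasDerivAt Cfun (-(Real.pi / 2) * Sfun x) x := by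
  have h : HasDerivAt (fun x : ℝ => Real.pi * (x - 1) / 2) (Real.pi / 2) x := by
    simpa [mul_div_assoc] using (((hasDerivAt_id x).sub_const 1).const_mul Real.pi).div_const 2
  have := (Real.hasDerivAt_cos (Real.pi * (x-1)/2)).comp x h
  unfold Cfun Sfun
  exact (h.cos).congr_deriv (by ring)


/-- Any twice differentiable `y` solving
`y'' + 2πy' + (5/4)π²y = 0` on `[1,3]` equals `c₁y₁ + c₂y₂` on `[1,3]`,
with `c₁ = y(1)` and `c₂ = (2/π)y'(1)`. -/
theorem stmt_15 (y : ℝ → ℝ) (hy : Differentiable ℝ y) (hy' : Differentiable ℝ (deriv y))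
    (hode : ∀ x ∈ Set.Icc (1 : ℝ) 3,
      deriv (deriv y) x + 2 * Real.pi * deriv y x + (5 / 4) * Real.pi ^ 2 * y x = 0) :
    ∀ x ∈ Set.Icc (1 : ℝ) 3,
      y x = y 1 * y₁ x + (2 / Real.pi) * deriv y 1 * y₂ x := by
  set c₁ := y 1 with hc₁
  set c₂ := (2 / Real.pi) * deriv y 1 with hc₂
  set z : ℝ → ℝ := fun x => c₁ * (Efun x * (Cfun x + 2 * Sfun x)) + c₂ * (Efun x * Sfun x)
    with hzdef
  set w : ℝ → ℝ := fun x =>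
      c₁ * (Efun x * (-(5 * Real.pi / 2) * Sfun x)) +
      c₂ * (Efun x * (-Real.pi * Sfun x + Real.pi / 2 * Cfun x)) with hwdef
  have hz : ∀ x, HasDerivAt z (w x) x := by
    intro x
    have h1 : HasDerivAt (fun x => Efun x * (Cfun x + 2 * Sfun x))
        (-Real.pi * Efun x * (Cfun x + 2 * Sfun x) +
          Efun x * (-(Real.pi / 2) * Sfun x + 2 * (Real.pi / 2 * Cfun x))) x :=
      (hE x).mul ((hC x).add ((hS x).const_mul 2))
    have h2 : HasDerivAt (fun x => Efun x * Sfun x)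
        (-Real.pi * Efun x * Sfun x + Efun x * (Real.pi / 2 * Cfun x)) x := (hE x).mul (hS x)
    have := (h1.const_mul c₁).add (h2.const_mul c₂)
    exact this.congr_deriv (by simp only [hwdef]; ring)
  have hw : ∀ x, HasDerivAt w (-2 * Real.pi * w x - 5 / 4 * Real.pi ^ 2 * z x) x := by
    intro x
    have h1 : HasDerivAt (fun x => Efun x * (-(5 * Real.pi / 2) * Sfun x))
        (-Real.pi * Efun x * (-(5 * Real.pi / 2) * Sfun x) +
          Efun x * (-(5 * Real.pi / 2) * (Real.pi / 2 * Cfun x))) x :=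
      (hE x).mul ((hS x).const_mul _)
    have h2 : HasDerivAt (fun x => Efun x * (-Real.pi * Sfun x + Real.pi / 2 * Cfun x))
        (-Real.pi * Efun x * (-Real.pi * Sfun x + Real.pi / 2 * Cfun x) +
          Efun x * (-Real.pi * (Real.pi / 2 * Cfun x) + Real.pi / 2 * (-(Real.pi / 2) * Sfun x))) x :=
      (hE x).mul (((hS x).const_mul (-Real.pi)).add ((hC x).const_mul (Real.pi / 2)))
    have := (h1.const_mul c₁).add (h2.const_mul c₂)
    exact this.congr_deriv (by simp only [hwdef, hzdef]; ring)
  -- the first-order system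
  set v : ℝ → ℝ × ℝ → ℝ × ℝ :=
    fun _ p => (p.2, -2 * Real.pi * p.2 - 5 / 4 * Real.pi ^ 2 * p.1) with hvdef
  set L : ℝ × ℝ →L[ℝ] ℝ × ℝ :=
    (ContinuousLinearMap.snd ℝ ℝ ℝ).prod
      ((-2 * Real.pi) • ContinuousLinearMap.snd ℝ ℝ ℝ +
        (-(5 / 4 * Real.pi ^ 2)) • ContinuousLinearMap.fst ℝ ℝ ℝ) with hLdef
  have hvL : ∀ t p, v t p = L p := by
    intro t p
    simp [hvdef, hLdef, ContinuousLinearMap.prod_apply]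
    ring
  have hlip : ∀ t, LipschitzWith ‖L‖₊ (v t) := by
    intro t
    have := L.lipschitz
    have hv : v t = ⇑L := funext (hvL t)
    rw [hv]
    exact this
  set f : ℝ → ℝ × ℝ := fun t => (y t, deriv y t) with hfdef
  set g : ℝ → ℝ × ℝ := fun t => (z t, w t) with hgdef
  have hfc : ContinuousOn f (Icc 1 3) :=
    (hy.continuous.prodMk hy'.continuous).continuousOn
  have hgc : ContinuousOn g (Icc 1 3) := by
    apply ContinuousOn.prodMk
    · exact fun t _ => ((hz t).continuousAt).continuousWithinAt
    · exact fun t _ => ((hw t).continuousAt).continuousWithinAt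
  have hf' : ∀ t ∈ Ico (1 : ℝ) 3, HasDerivWithinAt f (v t (f t)) (Ici t) t := by
    intro t ht
    have h := ((hy t).hasDerivAt).prodMk ((hy' t).hasDerivAt)
    have heq : (deriv y t, deriv (deriv y) t) = v t (f t) := by
      have h0 := hode t (Ico_subset_Icc_self ht)
      simp only [hvdef, hfdef]
      refine Prod.ext rfl ?_
      simp only
      linarith
    rw [heq] at h
    exact h.hasDerivWithinAt
  have hg' : ∀ t ∈ Ico (1 : ℝ) 3, HasDerivWithinAt g (v t (g t)) (Ici t) t := by
    intro t ht
    have h := (hz t).prodMk (hw t)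
    have heq : (w t, -2 * Real.pi * w t - 5 / 4 * Real.pi ^ 2 * z t) = v t (g t) := rfl
    rw [heq] at h
    exact h.hasDerivWithinAt
  have hinit : f 1 = g 1 := by
    have hE1 : Efun 1 = 1 := by simp [Efun]
    have hS1 : Sfun 1 = 0 := by simp [Sfun]
    have hC1 : Cfun 1 = 1 := by simp [Cfun]
    simp only [hfdef, hgdef, hzdef, hwdef, hE1, hS1, hC1]
    refine Prod.ext ?_ ?_
    · simp [hc₁]
    · simp only [hc₂]
      field_simp
      ring
  have key := ODE_solution_unique hlip hfc hf' hgc hg' hinit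
  intro x hx
  have := key hx
  have h1 : y x = z x := congrArg Prod.fst this
  rw [h1]
  simp only [hzdef, y₁, y₂, Efun, Sfun, Cfun]
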